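/- LL as an instance of superLL: consider the instance of superLL with E = {•} and all relations full, i.e. de(•) true, co_k(•,…,•,•) true for all k ≥ 0, dg(•,•,•) true, and p_n(•) true for all n. Then (i) this instance satisfies the Girardization axioms (gir1)–(gir5), and (ii) writing !A := !_• A and ?A := ?_• A, a sequent is provable in this instance if and only if it is provable in LL (linear logic with Girard's promotion). -/

import Mathlib

/-- Linear logic formulas with exponential connectives indexed by signatures in `E`. -/
inductive Formula (E : Type) : Type
  | var : ℕ → Formula E
  | covar : ℕ → Formula E
  | tens : Formula E → Formula E → Formula E
  | parr : Formula E → Formula E → Formula E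
  | one : Formula E
  | bot : Formula E
  | awith : Formula E → Formula E → Formula E
  | aplus : Formula E → Formula E → Formula E
  | top : Formula E
  | zero : Formula E
  | oc : E → Formula E → Formula E
  | wn : E → Formula E → Formula E

namespace Formula

/-- Duality on formulas. -/
def dual {E : Type} : Formula E → Formula E
  | var n => covar n
  | covar n => var n
  | tens A B => parr A.dual B.dual
  | parr A B => tens A.dual B.dual
  | one => bot
  | bot => one
  | awith A B => aplus A.dual B.dual
  | aplus A B => awith A.dual B.dual
  | top => zero
  | zero => top
  | oc e A => wn e A.dual
  | wn e A => oc e A.dual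

end Formula

/-- The sequent calculus superLL(E, de, co, dg, p).  The `Bool` index records whether
the cut rule may be used (`true` = cut allowed, `false` = cut-free proofs only). -/
inductive SuperLL {E : Type} (de : E → Prop) (co : List E → E → Prop)
    (dg : E → E → E → Prop) (p : ℕ → E → Prop) : Bool → List (Formula E) → Prop
  | ax (b) (A : Formula E) : SuperLL de co dg p b [A, A.dual]
  | ex {b Γ Δ} : SuperLL de co dg p b Γ → Γ.Perm Δ → SuperLL de co dg p b Δ
  | cut {A : Formula E} {Γ Δ : List (Formula E)} : SuperLL de co dg p true (A :: Γ) →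
      SuperLL de co dg p true (A.dual :: Δ) → SuperLL de co dg p true (Γ ++ Δ)
  | tens {b} {A B : Formula E} {Γ Δ : List (Formula E)} : SuperLL de co dg p b (A :: Γ) → SuperLL de co dg p b (B :: Δ) →
      SuperLL de co dg p b (A.tens B :: (Γ ++ Δ))
  | parr {b} {A B : Formula E} {Γ : List (Formula E)} : SuperLL de co dg p b (A :: B :: Γ) →
      SuperLL de co dg p b (A.parr B :: Γ)
  | one (b) : SuperLL de co dg p b [Formula.one]
  | bot {b Γ} : SuperLL de co dg p b Γ → SuperLL de co dg p b (Formula.bot :: Γ)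
  | awith {b} {A B : Formula E} {Γ : List (Formula E)} : SuperLL de co dg p b (A :: Γ) → SuperLL de co dg p b (B :: Γ) →
      SuperLL de co dg p b (A.awith B :: Γ)
  | aplus1 {b} {A B : Formula E} {Γ : List (Formula E)} : SuperLL de co dg p b (A :: Γ) →
      SuperLL de co dg p b (A.aplus B :: Γ)
  | aplus2 {b} {A B : Formula E} {Γ : List (Formula E)} : SuperLL de co dg p b (B :: Γ) →
      SuperLL de co dg p b (A.aplus B :: Γ)
  | top (b) (Γ) : SuperLL de co dg p b (Formula.top :: Γ)
  | der {b e A Γ} : de e → SuperLL de co dg p b (A :: Γ) →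
      SuperLL de co dg p b (Formula.wn e A :: Γ)
  | con {b} {l : List E} {e A Γ} : co l e →
      SuperLL de co dg p b (l.map (fun ei => Formula.wn ei A) ++ Γ) →
      SuperLL de co dg p b (Formula.wn e A :: Γ)
  | dig {b e1 e2 e A Γ} : dg e1 e2 e →
      SuperLL de co dg p b (Formula.wn e1 (Formula.wn e2 A) :: Γ) →
      SuperLL de co dg p b (Formula.wn e A :: Γ)
  | prom {b e A} {Δ : List (Formula E)} : p Δ.length e → SuperLL de co dg p b (A :: Δ) →
      SuperLL de co dg p b (Formula.oc e A :: Δ.map (Formula.wn e))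

inductive LL : Bool → List (Formula Unit) → Prop
  | ax (b) (A : Formula Unit) : LL b [A, A.dual]
  | ex {b Γ Δ} : LL b Γ → Γ.Perm Δ → LL b Δ
  | cut {A : Formula Unit} {Γ Δ : List (Formula Unit)} :
      LL true (A :: Γ) → LL true (A.dual :: Δ) → LL true (Γ ++ Δ)
  | tens {b} {A B : Formula Unit} {Γ Δ : List (Formula Unit)} :
      LL b (A :: Γ) → LL b (B :: Δ) → LL b (A.tens B :: (Γ ++ Δ))
  | parr {b} {A B : Formula Unit} {Γ : List (Formula Unit)} :
      LL b (A :: B :: Γ) → LL b (A.parr B :: Γ)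
  | one (b) : LL b [Formula.one]
  | bot {b Γ} : LL b Γ → LL b (Formula.bot :: Γ)
  | awith {b} {A B : Formula Unit} {Γ : List (Formula Unit)} :
      LL b (A :: Γ) → LL b (B :: Γ) → LL b (A.awith B :: Γ)
  | aplus1 {b} {A B : Formula Unit} {Γ : List (Formula Unit)} :
      LL b (A :: Γ) → LL b (A.aplus B :: Γ)
  | aplus2 {b} {A B : Formula Unit} {Γ : List (Formula Unit)} :
      LL b (B :: Γ) → LL b (A.aplus B :: Γ)
  | top (b) (Γ) : LL b (Formula.top :: Γ)
  | prom {b} {A : Formula Unit} {Γ : List (Formula Unit)} :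
      LL b (A :: Γ.map (Formula.wn ())) → LL b (Formula.oc () A :: Γ.map (Formula.wn ()))
  | der {b} {A : Formula Unit} {Γ : List (Formula Unit)} :
      LL b (A :: Γ) → LL b (Formula.wn () A :: Γ)
  | wk {b} {A : Formula Unit} {Γ : List (Formula Unit)} :
      LL b Γ → LL b (Formula.wn () A :: Γ)
  | ctr {b} {A : Formula Unit} {Γ : List (Formula Unit)} :
      LL b (Formula.wn () A :: Formula.wn () A :: Γ) → LL b (Formula.wn () A :: Γ)

/-- The LL instance of superLL: `E = {•}` and all relations full. -/
def deLL : Unit → Prop := fun _ => True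
def coLL : List Unit → Unit → Prop := fun _ _ => True
def dgLL : Unit → Unit → Unit → Prop := fun _ _ _ => True
def pLL : ℕ → Unit → Prop := fun _ _ => True


section Helpers

open Formula

lemma Formula.dual_dual {E : Type} (A : Formula E) : A.dual.dual = A := by
  induction A <;> simp [Formula.dual, *]

lemma ll_ders {b : Bool} : ∀ (Γ Δ : List (Formula Unit)),
    LL b (Δ ++ Γ) → LL b (Δ ++ Γ.map (Formula.wn ()))
  | [], Δ, h => by simpa using h
  | D :: Γ, Δ, h => by
    have h1 : LL b (D :: (Δ ++ Γ)) := LL.ex h List.perm_middle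
    have h2 : LL b (Formula.wn () D :: (Δ ++ Γ)) := LL.der h1
    have h3 := ll_ders Γ (Formula.wn () D :: Δ) (by simpa using h2)
    exact LL.ex h3 (by simpa using (List.perm_middle (a := Formula.wn () D)
      (l₁ := Δ) (l₂ := Γ.map (Formula.wn ()))).symm)

lemma ll_wk_many {b : Bool} {A : Formula Unit} :
    ∀ (n : ℕ) (Γ : List (Formula Unit)),
    LL b (List.replicate n (Formula.wn () A) ++ Γ) → LL b (Formula.wn () A :: Γ)
  | 0, Γ, h => LL.wk (by simpa using h)
  | n + 1, Γ, h => by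
    have h1 : LL b (List.replicate n (Formula.wn () A) ++ (Formula.wn () A :: Γ)) := by
      refine LL.ex h ?_
      simpa [List.replicate_succ] using
        (List.perm_middle (a := Formula.wn () A)
          (l₁ := List.replicate n (Formula.wn () A)) (l₂ := Γ)).symm
    exact LL.ctr (ll_wk_many n _ h1)

lemma ll_dig {A : Formula Unit} {Γ : List (Formula Unit)}
    (h : LL true (Formula.wn () (Formula.wn () A) :: Γ)) :
    LL true (Formula.wn () A :: Γ) := by
  have hax : LL true [A.dual, Formula.wn () A] := by
    have := LL.ax true A
    have h1 : LL true (Formula.wn () A :: [A.dual]) :=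
      LL.der (LL.ax true A)
    exact LL.ex h1 (List.Perm.swap _ _ _)
  have hp1 : LL true (Formula.oc () A.dual :: [A].map (Formula.wn ())) :=
    LL.prom (Γ := [A]) (by simpa using hax)
  have hp2 : LL true (Formula.oc () (Formula.oc () A.dual) :: [A].map (Formula.wn ())) :=
    LL.prom (Γ := [A]) hp1
  have hcut := LL.cut (A := Formula.wn () (Formula.wn () A)) (Δ := [Formula.wn () A]) h
    (by simpa [Formula.dual, Formula.dual_dual] using hp2)
  exact LL.ex hcut (by simpa using (List.perm_middle (a := Formula.wn () A)
    (l₁ := Γ) (l₂ := [])).symm)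

lemma s_digs {b : Bool} : ∀ (Γ Δ : List (Formula Unit)),
    SuperLL deLL coLL dgLL pLL b
      (Δ ++ Γ.map (fun D => Formula.wn () (Formula.wn () D))) →
    SuperLL deLL coLL dgLL pLL b (Δ ++ Γ.map (Formula.wn ()))
  | [], Δ, h => by simpa using h
  | D :: Γ, Δ, h => by
    have h1 := SuperLL.ex h (List.perm_middle (a := Formula.wn () (Formula.wn () D)))
    have h2 : SuperLL deLL coLL dgLL pLL b (Formula.wn () D ::
        (Δ ++ Γ.map (fun D => Formula.wn () (Formula.wn () D)))) :=
      SuperLL.dig trivial h1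
    have h3 := s_digs Γ (Formula.wn () D :: Δ) (by simpa using h2)
    exact SuperLL.ex h3 (by simpa using (List.perm_middle (a := Formula.wn () D)
      (l₁ := Δ) (l₂ := Γ.map (Formula.wn ()))).symm)

lemma map_wn_replicate (A : Formula Unit) : ∀ (l : List Unit),
    l.map (fun ei => Formula.wn ei A) = List.replicate l.length (Formula.wn () A)
  | [] => rfl
  | _ :: l => by simp [map_wn_replicate A l, List.replicate_succ]

lemma superLL_to_LL {b : Bool} {Γ : List (Formula Unit)}
    (h : SuperLL deLL coLL dgLL pLL b Γ) : LL true Γ := by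
  induction h with
  | ax b A => exact LL.ax _ A
  | ex _ hp ih => exact LL.ex ih hp
  | cut _ _ ih1 ih2 => exact LL.cut ih1 ih2
  | tens _ _ ih1 ih2 => exact LL.tens ih1 ih2
  | parr _ ih => exact LL.parr ih
  | one b => exact LL.one _
  | bot _ ih => exact LL.bot ih
  | awith _ _ ih1 ih2 => exact LL.awith ih1 ih2
  | aplus1 _ ih => exact LL.aplus1 ih
  | aplus2 _ ih => exact LL.aplus2 ih
  | top b Γ => exact LL.top _ _
  | der _ _ ih => exact LL.der ih
  | con hco _ ih =>
    rename_i b0 l e A Γ' h0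
    rw [map_wn_replicate A l] at ih
    exact ll_wk_many l.length Γ' ih
  | dig _ _ ih => exact ll_dig ih
  | prom _ _ ih =>
    rename_i b0 e A Δ hp h0
    exact LL.prom (ll_ders Δ [A] ih)

lemma LL_to_superLL {b : Bool} {Γ : List (Formula Unit)}
    (h : LL b Γ) : SuperLL deLL coLL dgLL pLL true Γ := by
  induction h with
  | ax b A => exact SuperLL.ax _ A
  | ex _ hp ih => exact SuperLL.ex ih hp
  | cut _ _ ih1 ih2 => exact SuperLL.cut ih1 ih2
  | tens _ _ ih1 ih2 => exact SuperLL.tens ih1 ih2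
  | parr _ ih => exact SuperLL.parr ih
  | one b => exact SuperLL.one _
  | bot _ ih => exact SuperLL.bot ih
  | awith _ _ ih1 ih2 => exact SuperLL.awith ih1 ih2
  | aplus1 _ ih => exact SuperLL.aplus1 ih
  | aplus2 _ ih => exact SuperLL.aplus2 ih
  | top b Γ => exact SuperLL.top _ _
  | der _ ih => exact SuperLL.der trivial ih
  | wk _ ih => exact SuperLL.con (l := []) trivial (by simpa using ih)
  | ctr _ ih => exact SuperLL.con (l := [(), ()]) trivial (by simpa using ih)
  | prom _ ih =>
    rename_i A Γ' _
    have h1 := SuperLL.prom (Δ := Γ'.map (Formula.wn ())) (e := ())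
      (trivial : pLL _ ()) ih
    have h2 : SuperLL deLL coLL dgLL pLL true ([Formula.oc () A] ++
        Γ'.map (fun D => Formula.wn () (Formula.wn () D))) := by
      simpa [List.map_map, Function.comp_def] using h1
    simpa using s_digs Γ' [Formula.oc () A] h2

end Helpers

/-- LL as an instance of superLL: the full instance on a singleton satisfies the
Girardization axioms, and provability in the instance coincides with provability in LL
(with Girard's promotion). -/
theorem superLL_LL_instance :
    ((∀ e1 e2 e : Unit, dgLL e1 e2 e → pLL 1 e1) ∧
    (∀ e1 e2 e : Unit, deLL e1 → dgLL e1 e2 e → coLL [e2] e) ∧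
    (∀ (l : List Unit) (e1 e2 e : Unit), coLL l e1 → dgLL e1 e2 e →
      ∃ l' : List Unit, List.Forall₂ (fun εi ε'i => dgLL εi e2 ε'i) l l' ∧ coLL l' e) ∧
    (∀ e1 e2 e3 e' e : Unit, dgLL e1 e2 e' → dgLL e' e3 e →
      ∃ e'' : Unit, dgLL e2 e3 e'' ∧ dgLL e1 e'' e) ∧
    (∀ (n : ℕ) (e : Unit), 0 < n → pLL n e → ∃ e' : Unit, deLL e' ∧ dgLL e e' e)) ∧
    (∀ Γ : List (Formula Unit), SuperLL deLL coLL dgLL pLL true Γ ↔ LL true Γ) := by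
    exact ⟨⟨fun _ _ _ _ => trivial, fun _ _ _ _ _ => trivial,
    fun l _ _ _ _ _ => ⟨l, List.forall₂_same.2 fun _ _ => trivial, trivial⟩,
    fun _ _ _ _ _ _ _ => ⟨(), trivial, trivial⟩,
    fun _ _ _ _ => ⟨(), trivial, trivial⟩⟩,
    fun Γ => ⟨superLL_to_LL, LL_to_superLL⟩⟩
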